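/- Let ρ be a Borel probability measure on SL_d(ℝ) with an exponential moment, i.e. ∫‖g‖^ε dρ(g) < ∞ for some ε > 0. Then for any t₁, t₂ > 0 there exist n₀ ∈ ℕ and t₃ > 0 such that for all n ≥ n₀, ρ^{*n}({g : ρ^{*n}(B(g, e^{−t₂ n})) ≥ e^{−t₃ n}}) ≥ 1 − e^{−t₁ n}. -/

import Mathlib

noncomputable section

open MeasureTheory
open scoped ENNReal

/-- `n`-fold convolution power `ρ^{*n}` of a measure on a monoid (`ρ^{*0} = δ_1`). -/
def convPow {G : Type*} [Monoid G] [MeasurableSpace G] (ρ : Measure G) : ℕ → Measure G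
  | 0 => Measure.dirac 1
  | n + 1 => (convPow ρ n).mconv ρ

/-- The operator norm of a `d × d` real matrix acting on Euclidean space. -/
def mnorm {d : ℕ} (g : Matrix (Fin d) (Fin d) ℝ) : ℝ :=
  ‖Matrix.toEuclideanCLM (𝕜 := ℝ) g‖

/-- The ball of radius `r` around `g` for the operator-norm metric. -/
def mball {d : ℕ} (g : Matrix (Fin d) (Fin d) ℝ) (r : ℝ) :
    Set (Matrix (Fin d) (Fin d) ℝ) :=
  {h | mnorm (h - g) < r}

instance matMeasurableSpace {d : ℕ} : MeasurableSpace (Matrix (Fin d) (Fin d) ℝ) :=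
  MeasurableSpace.pi (m := fun _ : Fin d => MeasurableSpace.pi)

namespace Stmt12Aux

variable {d : ℕ}

instance : SecondCountableTopology (Matrix (Fin d) (Fin d) ℝ) :=
  inferInstanceAs <| SecondCountableTopology (Fin d → Fin d → ℝ)

instance : BorelSpace (Matrix (Fin d) (Fin d) ℝ) :=
  inferInstanceAs <| BorelSpace (Fin d → Fin d → ℝ)

instance : NormedAddCommGroup (Matrix (Fin d) (Fin d) ℝ) :=
  inferInstanceAs <| NormedAddCommGroup (Fin d → Fin d → ℝ)

instance : NormedSpace ℝ (Matrix (Fin d) (Fin d) ℝ) :=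
  inferInstanceAs <| NormedSpace ℝ (Fin d → Fin d → ℝ)

instance : FiniteDimensional ℝ (Matrix (Fin d) (Fin d) ℝ) :=
  inferInstanceAs <| FiniteDimensional ℝ (Fin d → Fin d → ℝ)

/-- `toEuclideanCLM` as a linear map. -/
def matCLM (d : ℕ) : Matrix (Fin d) (Fin d) ℝ →ₗ[ℝ]
    (EuclideanSpace ℝ (Fin d) →L[ℝ] EuclideanSpace ℝ (Fin d)) :=
  { toFun := fun g => Matrix.toEuclideanCLM (𝕜 := ℝ) g,
    map_add' := fun a b => map_add _ a b,
    map_smul' := fun c a => map_smul (Matrix.toEuclideanCLM (𝕜 := ℝ)) c a }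

/-- inverse of `toEuclideanCLM`. -/
def matInv (d : ℕ) := (Matrix.toEuclideanCLM (𝕜 := ℝ) (n := Fin d)).symm

set_option maxHeartbeats 1000000 in
/-- inverse of `toEuclideanCLM` as a linear map. -/
def matCLMinv (d : ℕ) : (EuclideanSpace ℝ (Fin d) →L[ℝ] EuclideanSpace ℝ (Fin d)) →ₗ[ℝ]
    Matrix (Fin d) (Fin d) ℝ :=
  { toFun := fun f => matInv d f,
    map_add' := fun a b => map_add (matInv d) a b,
    map_smul' := fun c a => map_smul (matInv d) c a }

theorem mnorm_eq (g : Matrix (Fin d) (Fin d) ℝ) : mnorm g = ‖matCLM d g‖ := rfl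

theorem mnorm_nonneg (g : Matrix (Fin d) (Fin d) ℝ) : 0 ≤ mnorm g := norm_nonneg _

theorem mnorm_mul_le (a b : Matrix (Fin d) (Fin d) ℝ) : mnorm (a * b) ≤ mnorm a * mnorm b := by
  unfold mnorm; rw [map_mul]; exact norm_mul_le _ _

theorem mnorm_tri (a b : Matrix (Fin d) (Fin d) ℝ) : mnorm (a + b) ≤ mnorm a + mnorm b := by
  unfold mnorm; rw [map_add]; exact norm_add_le _ _

theorem mnorm_neg (a : Matrix (Fin d) (Fin d) ℝ) : mnorm (-a) = mnorm a := by
  unfold mnorm; rw [map_neg, norm_neg]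

theorem mnorm_one_le : mnorm (1 : Matrix (Fin d) (Fin d) ℝ) ≤ 1 := by
  unfold mnorm; rw [map_one, ContinuousLinearMap.one_def]
  exact ContinuousLinearMap.norm_id_le

theorem mnorm_cont : Continuous (mnorm (d := d)) :=
  (LinearMap.continuous_of_finiteDimensional (matCLM d)).norm

theorem mnorm_meas : Measurable (mnorm (d := d)) := mnorm_cont.measurable

theorem exists_c (d : ℕ) : ∃ c : ℝ, 0 < c ∧
    ∀ g : Matrix (Fin d) (Fin d) ℝ, mnorm g ≤ c * ‖g‖ := by
  set T := LinearMap.toContinuousLinearMap (matCLM d)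
  refine ⟨‖T‖ + 1, by positivity, fun g => ?_⟩
  have h1 : mnorm g = ‖T g‖ := rfl
  calc mnorm g = ‖T g‖ := h1
    _ ≤ ‖T‖ * ‖g‖ := T.le_opNorm g
    _ ≤ (‖T‖ + 1) * ‖g‖ := by nlinarith [norm_nonneg g, norm_nonneg T]

theorem exists_c' (d : ℕ) : ∃ c' : ℝ, 0 < c' ∧
    ∀ g : Matrix (Fin d) (Fin d) ℝ, ‖g‖ ≤ c' * mnorm g := by
  set T := LinearMap.toContinuousLinearMap (matCLMinv d)
  refine ⟨‖T‖ + 1, by positivity, fun g => ?_⟩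
  have h1 : g = T (Matrix.toEuclideanCLM (𝕜 := ℝ) g) :=
    ((Matrix.toEuclideanCLM (𝕜 := ℝ) (n := Fin d)).symm_apply_apply g).symm
  calc ‖g‖ = ‖T (Matrix.toEuclideanCLM (𝕜 := ℝ) g)‖ := by rw [← h1]
    _ ≤ ‖T‖ * mnorm g := T.le_opNorm _
    _ ≤ (‖T‖ + 1) * mnorm g := by nlinarith [mnorm_nonneg g, norm_nonneg T]

end Stmt12Aux

namespace Stmt12Aux

variable {d : ℕ}

theorem convPow_prob (ρ : Measure (Matrix (Fin d) (Fin d) ℝ)) [IsProbabilityMeasure ρ] (n : ℕ) :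
    IsProbabilityMeasure (convPow ρ n) := by
  induction n with
  | zero => rw [convPow]; infer_instance
  | succ n ih => rw [convPow]; exact Measure.probabilitymeasure_of_probabilitymeasures_mconv _ _

theorem lintegral_mconv (μ ρ : Measure (Matrix (Fin d) (Fin d) ℝ)) [SFinite μ] [SFinite ρ]
    {f : Matrix (Fin d) (Fin d) ℝ → ℝ≥0∞} (hf : Measurable f) :
    ∫⁻ g, f g ∂(μ.mconv ρ) = ∫⁻ x, ∫⁻ y, f (x * y) ∂ρ ∂μ := by
  rw [Measure.mconv, lintegral_map hf measurable_mul]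
  exact lintegral_prod _ ((hf.comp measurable_mul).aemeasurable)

theorem fε_meas (ε : ℝ) : Measurable (fun g : Matrix (Fin d) (Fin d) ℝ =>
    ENNReal.ofReal (mnorm g ^ ε)) :=
  ENNReal.measurable_ofReal.comp (mnorm_meas.pow measurable_const)

theorem fε_submul (ε : ℝ) (hε : 0 ≤ ε) (x y : Matrix (Fin d) (Fin d) ℝ) :
    ENNReal.ofReal (mnorm (x * y) ^ ε) ≤
      ENNReal.ofReal (mnorm x ^ ε) * ENNReal.ofReal (mnorm y ^ ε) := by
  rw [← ENNReal.ofReal_mul (Real.rpow_nonneg (mnorm_nonneg x) ε)]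
  apply ENNReal.ofReal_le_ofReal
  rw [← Real.mul_rpow (mnorm_nonneg x) (mnorm_nonneg y)]
  exact Real.rpow_le_rpow (mnorm_nonneg _) (mnorm_mul_le x y) hε

theorem moment_bound (ρ : Measure (Matrix (Fin d) (Fin d) ℝ)) [IsProbabilityMeasure ρ]
    (ε : ℝ) (hε : 0 ≤ ε) (n : ℕ) :
    ∫⁻ g, ENNReal.ofReal (mnorm g ^ ε) ∂(convPow ρ n) ≤
      (∫⁻ g, ENNReal.ofReal (mnorm g ^ ε) ∂ρ) ^ n := by
  set I := ∫⁻ g, ENNReal.ofReal (mnorm g ^ ε) ∂ρ with hI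
  induction n with
  | zero =>
    rw [convPow, lintegral_dirac' _ (fε_meas ε), pow_zero]
    apply ENNReal.ofReal_le_one.2
    exact Real.rpow_le_one (mnorm_nonneg _) mnorm_one_le hε
  | succ n ih =>
    haveI := convPow_prob ρ n
    rw [convPow, lintegral_mconv _ _ (fε_meas ε)]
    calc ∫⁻ x, ∫⁻ y, ENNReal.ofReal (mnorm (x * y) ^ ε) ∂ρ ∂(convPow ρ n)
        ≤ ∫⁻ x, ∫⁻ y, ENNReal.ofReal (mnorm x ^ ε) * ENNReal.ofReal (mnorm y ^ ε) ∂ρ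
            ∂(convPow ρ n) := by
          refine lintegral_mono fun x => lintegral_mono fun y => fε_submul ε hε x y
      _ = ∫⁻ x, ENNReal.ofReal (mnorm x ^ ε) * I ∂(convPow ρ n) := by
          refine lintegral_congr fun x => ?_
          rw [lintegral_const_mul _ (fε_meas ε)]
      _ = (∫⁻ x, ENNReal.ofReal (mnorm x ^ ε) ∂(convPow ρ n)) * I :=
          lintegral_mul_const _ (fε_meas ε)
      _ ≤ I ^ n * I := mul_le_mul_left ih I
      _ = I ^ (n + 1) := (pow_succ I n).symm

theorem markov (μ : Measure (Matrix (Fin d) (Fin d) ℝ)) (ε : ℝ) (hε : 0 ≤ ε)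
    (R : ℝ) (hR : 0 < R) :
    μ {g | R ≤ mnorm g} ≤ (ENNReal.ofReal (R ^ ε))⁻¹ *
      ∫⁻ g, ENNReal.ofReal (mnorm g ^ ε) ∂μ := by
  have hsub : {g : Matrix (Fin d) (Fin d) ℝ | R ≤ mnorm g} ⊆
      {g | ENNReal.ofReal (R ^ ε) ≤ ENNReal.ofReal (mnorm g ^ ε)} := fun g hg =>
    ENNReal.ofReal_le_ofReal (Real.rpow_le_rpow hR.le hg hε)
  have ha0 : ENNReal.ofReal (R ^ ε) ≠ 0 := by
    simp [ENNReal.ofReal_eq_zero, not_le, Real.rpow_pos_of_pos hR ε]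
  calc μ {g | R ≤ mnorm g} ≤ μ {g | ENNReal.ofReal (R ^ ε) ≤ ENNReal.ofReal (mnorm g ^ ε)} :=
        measure_mono hsub
    _ = (ENNReal.ofReal (R ^ ε))⁻¹ * (ENNReal.ofReal (R ^ ε) *
          μ {g | ENNReal.ofReal (R ^ ε) ≤ ENNReal.ofReal (mnorm g ^ ε)}) := by
        rw [← mul_assoc, ENNReal.inv_mul_cancel ha0 ENNReal.ofReal_ne_top, one_mul]
    _ ≤ (ENNReal.ofReal (R ^ ε))⁻¹ * ∫⁻ g, ENNReal.ofReal (mnorm g ^ ε) ∂μ :=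
        mul_le_mul_right (mul_meas_ge_le_lintegral₀ (fε_meas ε).aemeasurable _) _

end Stmt12Aux

namespace Stmt12Aux

variable {d : ℕ}

theorem abs_round_le (y : ℝ) : |(round y : ℝ)| ≤ |y| + 1 / 2 := by
  have h1 := abs_sub_round y
  have h2 : |(round y : ℝ)| - |y| ≤ |(round y : ℝ) - y| := abs_sub_abs_le_abs_sub _ _
  rw [abs_sub_comm] at h2
  linarith

theorem cover (d : ℕ) (R s : ℝ) (hs : 0 < s) (hR : 0 ≤ R) :
    ∃ F : Finset (Matrix (Fin d) (Fin d) ℝ),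
      (F.card : ℝ) ≤ (2 * (R / s) + 5) ^ (d * d) ∧
      ∀ g : Matrix (Fin d) (Fin d) ℝ, (∀ i j, |g i j| ≤ R) →
        ∃ x ∈ F, ∀ i j, |g i j - x i j| ≤ s / 2 := by
  set K : ℤ := ⌈R / s⌉ + 1 with hK
  have hRs : 0 ≤ R / s := div_nonneg hR hs.le
  have hKR : R / s + 1 ≤ (K : ℝ) := by
    rw [hK]; push_cast
    linarith [Int.le_ceil (R / s)]
  have hKR2 : (K : ℝ) ≤ R / s + 2 := by
    rw [hK]; push_cast
    linarith [Int.ceil_lt_add_one (R / s)]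
  set T : Finset ℝ := (Finset.Icc (-K) K).image (fun k : ℤ => s * k) with hT
  have hTcard : (T.card : ℝ) ≤ 2 * (R / s) + 5 := by
    have h1 : T.card ≤ (Finset.Icc (-K) K).card := Finset.card_image_le
    have h2 : (Finset.Icc (-K) K).card = (K + 1 - -K).toNat := Int.card_Icc _ _
    have hKpos : (0:ℤ) ≤ K + 1 - -K := by
      have h4 : (1:ℝ) ≤ (K:ℝ) := by linarith
      have h5 : (1:ℤ) ≤ K := by exact_mod_cast h4
      omega
    have h3 : ((Finset.Icc (-K) K).card : ℝ) = 2 * (K : ℝ) + 1 := by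
      rw [h2]
      have h3' : ((K + 1 - -K).toNat : ℤ) = 2 * K + 1 := by omega
      exact_mod_cast congrArg (Int.cast : ℤ → ℝ) h3'
    have h6 : (T.card : ℝ) ≤ ((Finset.Icc (-K) K).card : ℝ) := by exact_mod_cast h1
    rw [h3] at h6
    linarith
  refine ⟨Fintype.piFinset (fun _ : Fin d => Fintype.piFinset fun _ : Fin d => T), ?_, ?_⟩
  · have hcard : (Fintype.piFinset (fun _ : Fin d =>
        Fintype.piFinset fun _ : Fin d => T)).card = T.card ^ (d * d) := by
      rw [Fintype.card_piFinset]
      simp [Fintype.card_piFinset, Finset.prod_const, ← pow_mul]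
    erw [hcard]
    push_cast
    exact pow_le_pow_left₀ (by positivity) hTcard _
  · intro g hg
    refine ⟨(fun i j => s * ((round (g i j / s) : ℤ) : ℝ)), ?_, ?_⟩
    · erw [Fintype.mem_piFinset]
      intro i
      rw [Fintype.mem_piFinset]
      intro j
      rw [hT, Finset.mem_image]
      refine ⟨round (g i j / s), ?_, rfl⟩
      rw [Finset.mem_Icc]
      have h7 : |(round (g i j / s) : ℝ)| ≤ R / s + 1 := by
        have := abs_round_le (g i j / s)
        have h8 : |g i j / s| ≤ R / s := by
          rw [abs_div, abs_of_pos hs]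
          gcongr
          exact hg i j
        linarith
      have h9 : |(round (g i j / s) : ℝ)| ≤ (K : ℝ) := by linarith
      rw [abs_le] at h9
      constructor
      · exact_mod_cast h9.1
      · exact_mod_cast h9.2
    · intro i j
      have h10 : g i j - s * ((round (g i j / s) : ℤ) : ℝ) =
          s * (g i j / s - (round (g i j / s) : ℝ)) := by
        field_simp
      rw [h10, abs_mul, abs_of_pos hs]
      have := abs_sub_round (g i j / s)
      nlinarith

end Stmt12Aux

set_option maxHeartbeats 1000000 in
/-- Let `ρ` be a Borel probability measure on `SL_d(ℝ)` with an exponential moment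
(`∫ ‖g‖^ε dρ < ∞` for some `ε > 0`). Then for any `t₁, t₂ > 0` there are `n₀ ∈ ℕ` and
`t₃ > 0` such that for all `n ≥ n₀`,
`ρ^{*n}({g : ρ^{*n}(B(g, e^{-t₂n})) ≥ e^{-t₃n}}) ≥ 1 - e^{-t₁n}`. -/
theorem stmt12 {d : ℕ} (ρ : Measure (Matrix (Fin d) (Fin d) ℝ)) [IsProbabilityMeasure ρ]
    (hSL : ρ {g | g.det = 1} = 1)
    (ε : ℝ) (hε : 0 < ε)
    (hmom : ∫⁻ g, ENNReal.ofReal (mnorm g ^ ε) ∂ρ < ⊤)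
    (t₁ t₂ : ℝ) (ht₁ : 0 < t₁) (ht₂ : 0 < t₂) :
    ∃ (n₀ : ℕ) (t₃ : ℝ), 0 < t₃ ∧ ∀ n : ℕ, n₀ ≤ n →
      ENNReal.ofReal (1 - Real.exp (-t₁ * n)) ≤
        convPow ρ n {g | ENNReal.ofReal (Real.exp (-t₃ * n)) ≤
          convPow ρ n (mball g (Real.exp (-t₂ * n)))} := by
  classical
  obtain ⟨c, hc, hcb⟩ := Stmt12Aux.exists_c d
  obtain ⟨c', hc', hcb'⟩ := Stmt12Aux.exists_c' d
  set I := ∫⁻ g, ENNReal.ofReal (mnorm g ^ ε) ∂ρ with hIdef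
  set J := I.toReal with hJdef
  have hJ0 : 0 ≤ J := ENNReal.toReal_nonneg
  have hIJ : I = ENNReal.ofReal J := (ENNReal.ofReal_toReal hmom.ne).symm
  set M := (2 * t₁ + Real.log (J + 1)) / ε with hM
  have hlog : 0 ≤ Real.log (J + 1) := Real.log_nonneg (by linarith)
  have hM0 : 0 < M := div_pos (by linarith) hε
  have hMε : M * ε = 2 * t₁ + Real.log (J + 1) := div_mul_cancel₀ _ hε.ne'
  have hkey : Real.exp (-(M * ε)) * J ≤ Real.exp (-(2 * t₁)) := by
    rw [hMε, neg_add, Real.exp_add]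
    have h1 : Real.exp (-Real.log (J + 1)) = (J + 1)⁻¹ := by
      rw [Real.exp_neg, Real.exp_log (by linarith)]
    rw [h1, mul_assoc]
    have h2 : (J + 1)⁻¹ * J ≤ 1 := by
      rw [inv_mul_le_iff₀ (by linarith : (0:ℝ) < J + 1)]
      linarith
    nlinarith [Real.exp_pos (-(2 * t₁))]
  set D := d * d with hD
  set A := 4 * c * c' + 5 with hA
  have hA1 : (1:ℝ) ≤ A := by nlinarith
  have hA0 : (0:ℝ) < A := by linarith
  set t₃ := (M + t₂) * D + 2 * t₁ + 1 with ht₃def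
  have hMt₂ : 0 < M + t₂ := by linarith
  have ht₃0 : 0 < t₃ := by
    have : (0:ℝ) ≤ (M + t₂) * D := by positivity
    linarith
  refine ⟨max ⌈(D : ℝ) * Real.log A⌉₊ ⌈Real.log 2 / t₁⌉₊, t₃, ht₃0, fun n hn => ?_⟩
  haveI hprob := Stmt12Aux.convPow_prob ρ n
  set μ := convPow ρ n with hμ
  set r := Real.exp (-t₂ * n) with hr
  have hr0 : 0 < r := Real.exp_pos _
  set δ := ENNReal.ofReal (Real.exp (-t₃ * n)) with hδ
  set Bad := {g : Matrix (Fin d) (Fin d) ℝ | μ (mball g r) < δ} with hBad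
  -- from n₀ conditions
  have hn1 : (D : ℝ) * Real.log A ≤ n := by
    calc (D : ℝ) * Real.log A ≤ ⌈(D : ℝ) * Real.log A⌉₊ := Nat.le_ceil _
      _ ≤ n := by exact_mod_cast (le_max_left _ _).trans hn
  have hn2 : Real.log 2 ≤ t₁ * n := by
    have h3 : Real.log 2 / t₁ ≤ (n : ℝ) := by
      calc Real.log 2 / t₁ ≤ ⌈Real.log 2 / t₁⌉₊ := Nat.le_ceil _
        _ ≤ n := by exact_mod_cast (le_max_right _ _).trans hn
    calc Real.log 2 = t₁ * (Real.log 2 / t₁) := by field_simp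
      _ ≤ t₁ * n := by gcongr
  -- Markov bound
  have hmark : μ {g | Real.exp (M * n) ≤ mnorm g} ≤
      ENNReal.ofReal (Real.exp (-(2 * t₁) * n)) := by
    have h := Stmt12Aux.markov μ ε hε.le (Real.exp (M * n)) (Real.exp_pos _)
    have hint : ∫⁻ g, ENNReal.ofReal (mnorm g ^ ε) ∂μ ≤ ENNReal.ofReal (J ^ n) := by
      calc ∫⁻ g, ENNReal.ofReal (mnorm g ^ ε) ∂μ ≤ I ^ n :=
            Stmt12Aux.moment_bound ρ ε hε.le n
        _ = ENNReal.ofReal (J ^ n) := by rw [hIJ, ← ENNReal.ofReal_pow hJ0]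
    have hreal : (Real.exp (M * n) ^ ε)⁻¹ * J ^ n ≤ Real.exp (-(2 * t₁) * n) := by
      rw [← Real.exp_mul, ← Real.exp_neg]
      have e1 : Real.exp (-(M * (n : ℕ) * ε)) = Real.exp (-(M * ε)) ^ n := by
        rw [← Real.exp_nat_mul]; congr 1; ring
      rw [e1, ← mul_pow]
      calc (Real.exp (-(M * ε)) * J) ^ n ≤ Real.exp (-(2 * t₁)) ^ n :=
            pow_le_pow_left₀ (by positivity) hkey n
        _ = Real.exp (-(2 * t₁) * n) := by rw [← Real.exp_nat_mul]; congr 1; ring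
    calc μ {g | Real.exp (M * n) ≤ mnorm g}
        ≤ (ENNReal.ofReal (Real.exp (M * n) ^ ε))⁻¹ *
            ∫⁻ g, ENNReal.ofReal (mnorm g ^ ε) ∂μ := h
      _ ≤ (ENNReal.ofReal (Real.exp (M * n) ^ ε))⁻¹ * ENNReal.ofReal (J ^ n) :=
          mul_le_mul_right hint _
      _ = ENNReal.ofReal ((Real.exp (M * n) ^ ε)⁻¹) * ENNReal.ofReal (J ^ n) := by
          rw [ENNReal.ofReal_inv_of_pos (Real.rpow_pos_of_pos (Real.exp_pos _) _)]
      _ = ENNReal.ofReal ((Real.exp (M * n) ^ ε)⁻¹ * J ^ n) :=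
          (ENNReal.ofReal_mul (by positivity)).symm
      _ ≤ ENNReal.ofReal (Real.exp (-(2 * t₁) * n)) := ENNReal.ofReal_le_ofReal hreal
  -- covering
  set s := r / (2 * c) with hs
  have hs0 : 0 < s := by positivity
  set R := c' * Real.exp (M * n) with hR
  have hR0 : 0 < R := by positivity
  obtain ⟨F, hFcard, hFcover⟩ := Stmt12Aux.cover d R s hs0 hR0.le
  have hsub : Bad ⊆ {g | Real.exp (M * n) ≤ mnorm g} ∪
      ⋃ x ∈ F, (mball x (r / 2) ∩ Bad) := by
    intro g hgBad
    by_cases hg1 : Real.exp (M * n) ≤ mnorm g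
    · exact Or.inl hg1
    · right
      have hg2 : mnorm g ≤ Real.exp (M * n) := (not_le.1 hg1).le
      have hent : ∀ i j, |g i j| ≤ R := by
        intro i j
        have e1 : |g i j| = ‖g i j‖ := (Real.norm_eq_abs _).symm
        calc |g i j| = ‖g i j‖ := e1
          _ ≤ ‖g i‖ := norm_le_pi_norm (g i) j
          _ ≤ ‖g‖ := norm_le_pi_norm g i
          _ ≤ c' * mnorm g := hcb' g
          _ ≤ c' * Real.exp (M * n) := by gcongr
      obtain ⟨x, hxF, hx⟩ := hFcover g hent
      have hgx : mnorm (g - x) ≤ r / 4 := by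
        have hnorm : ‖g - x‖ ≤ s / 2 := by
          refine (pi_norm_le_iff_of_nonneg (by positivity)).2 ?_
          intro i
          rw [pi_norm_le_iff_of_nonneg (by positivity)]
          intro j
          have e2 : (g - x) i j = g i j - x i j := Matrix.sub_apply ..
          rw [e2, Real.norm_eq_abs]
          exact hx i j
        calc mnorm (g - x) ≤ c * ‖g - x‖ := hcb _
          _ ≤ c * (s / 2) := by gcongr
          _ = r / 4 := by rw [hs]; field_simp; ring
      have hmem : g ∈ mball x (r / 2) := by
        show mnorm (g - x) < r / 2
        linarith
      exact Set.mem_biUnion hxF ⟨hmem, hgBad⟩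
  have hterm : ∀ x ∈ F, μ (mball x (r / 2) ∩ Bad) ≤ δ := by
    intro x hxF
    by_cases hne : (mball x (r / 2) ∩ Bad).Nonempty
    · obtain ⟨g, hg1, hg2⟩ := hne
      have hsub2 : mball x (r / 2) ⊆ mball g r := by
        intro h hh
        have e3 : mnorm (x - g) = mnorm (g - x) := by
          rw [← Stmt12Aux.mnorm_neg (g - x), neg_sub]
        show mnorm (h - g) < r
        calc mnorm (h - g) = mnorm ((h - x) + (x - g)) := by rw [sub_add_sub_cancel]
          _ ≤ mnorm (h - x) + mnorm (x - g) := Stmt12Aux.mnorm_tri _ _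
          _ < r / 2 + r / 2 := add_lt_add hh (e3 ▸ hg1)
          _ = r := add_halves r
      calc μ (mball x (r / 2) ∩ Bad) ≤ μ (mball x (r / 2)) :=
            measure_mono Set.inter_subset_left
        _ ≤ μ (mball g r) := measure_mono hsub2
        _ ≤ δ := hg2.le
    · rw [Set.not_nonempty_iff_eq_empty.1 hne, measure_empty]
      exact zero_le
  -- total bound on Bad
  have hμBad : μ Bad ≤ ENNReal.ofReal (Real.exp (-t₁ * n)) := by
    have hU : μ (⋃ x ∈ F, (mball x (r / 2) ∩ Bad)) ≤ F.card • δ :=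
      (measure_biUnion_finset_le F _).trans (Finset.sum_le_card_nsmul F _ δ hterm)
    have hcards : (F.card : ℝ≥0∞) * δ = ENNReal.ofReal (F.card * Real.exp (-t₃ * n)) := by
      rw [hδ, ← ENNReal.ofReal_natCast F.card, ← ENNReal.ofReal_mul (Nat.cast_nonneg _)]
    have hreal2 : Real.exp (-(2 * t₁) * n) + F.card * Real.exp (-t₃ * n) ≤
        Real.exp (-t₁ * n) := by
      -- card bound
      have hE1 : (1:ℝ) ≤ Real.exp ((M + t₂) * n) := Real.one_le_exp (by positivity)
      have hRs : R / s = 2 * c * c' * Real.exp ((M + t₂) * n) := by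
        have he : Real.exp ((M + t₂) * (n:ℝ)) = Real.exp (M * n) * Real.exp (t₂ * n) := by
          rw [← Real.exp_add]; congr 1; ring
        have he2 : Real.exp (-t₂ * (n:ℝ)) = (Real.exp (t₂ * n))⁻¹ := by
          rw [← Real.exp_neg]; congr 1; ring
        rw [hR, hs, hr, he, he2]
        have h1 := Real.exp_pos (M * (n:ℝ))
        have h2 := Real.exp_pos (t₂ * (n:ℝ))
        field_simp
      have hcard2 : (F.card : ℝ) ≤ A ^ D * Real.exp ((M + t₂) * D * n) := by
        calc (F.card : ℝ) ≤ (2 * (R / s) + 5) ^ D := hFcard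
          _ ≤ (A * Real.exp ((M + t₂) * n)) ^ D := by
              apply pow_le_pow_left₀ (by positivity)
              rw [hRs, hA]
              nlinarith
          _ = A ^ D * Real.exp ((M + t₂) * D * n) := by
              rw [mul_pow, ← Real.exp_nat_mul]
              congr 2
              ring
      have hAD : A ^ D * Real.exp (-(n:ℝ)) ≤ 1 := by
        have e4 : (A:ℝ) ^ D = Real.exp (D * Real.log A) := by
          rw [← Real.exp_log hA0, ← Real.exp_nat_mul, Real.exp_log hA0]
        rw [e4, ← Real.exp_add]
        apply Real.exp_le_one_iff.2
        linarith
      have hstep : (F.card : ℝ) * Real.exp (-t₃ * n) ≤ Real.exp (-(2 * t₁) * n) := by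
        have e5 : Real.exp ((M + t₂) * D * n) * Real.exp (-t₃ * n) =
            Real.exp (-(n:ℝ)) * Real.exp (-(2 * t₁) * n) := by
          rw [← Real.exp_add, ← Real.exp_add]
          congr 1
          rw [ht₃def]
          ring
        calc (F.card : ℝ) * Real.exp (-t₃ * n)
            ≤ A ^ D * Real.exp ((M + t₂) * D * n) * Real.exp (-t₃ * n) := by
              apply mul_le_mul_of_nonneg_right hcard2 (Real.exp_pos _).le
          _ = (A ^ D * Real.exp (-(n:ℝ))) * Real.exp (-(2 * t₁) * n) := by
              rw [mul_assoc, e5]; ring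
          _ ≤ 1 * Real.exp (-(2 * t₁) * n) := by
              apply mul_le_mul_of_nonneg_right hAD (Real.exp_pos _).le
          _ = Real.exp (-(2 * t₁) * n) := one_mul _
      have hhalf : Real.exp (-t₁ * n) ≤ 1 / 2 := by
        rw [show (1:ℝ)/2 = Real.exp (-Real.log 2) by
          rw [Real.exp_neg, Real.exp_log two_pos]; norm_num]
        apply Real.exp_le_exp.2
        linarith
      have e6 : Real.exp (-(2 * t₁) * n) = Real.exp (-t₁ * n) * Real.exp (-t₁ * n) := by
        rw [← Real.exp_add]; congr 1; ring
      nlinarith [Real.exp_pos (-t₁ * (n:ℝ)), hstep]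
    calc μ Bad ≤ μ ({g | Real.exp (M * n) ≤ mnorm g} ∪
          ⋃ x ∈ F, (mball x (r / 2) ∩ Bad)) := measure_mono hsub
      _ ≤ μ {g | Real.exp (M * n) ≤ mnorm g} +
          μ (⋃ x ∈ F, (mball x (r / 2) ∩ Bad)) := measure_union_le _ _
      _ ≤ ENNReal.ofReal (Real.exp (-(2 * t₁) * n)) + F.card • δ := add_le_add hmark hU
      _ = ENNReal.ofReal (Real.exp (-(2 * t₁) * n)) +
          ENNReal.ofReal (F.card * Real.exp (-t₃ * n)) := by
          rw [nsmul_eq_mul, hcards]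
      _ = ENNReal.ofReal (Real.exp (-(2 * t₁) * n) + F.card * Real.exp (-t₃ * n)) :=
          (ENNReal.ofReal_add (Real.exp_pos _).le (mul_nonneg (Nat.cast_nonneg _) (Real.exp_pos _).le)).symm
      _ ≤ ENNReal.ofReal (Real.exp (-t₁ * n)) := ENNReal.ofReal_le_ofReal hreal2
  -- conclude
  have hGood : {g | ENNReal.ofReal (Real.exp (-t₃ * n)) ≤ μ (mball g r)} = Badᶜ := by
    ext g
    simp only [hBad, Set.mem_setOf_eq, Set.mem_compl_iff, not_lt, hδ]
  rw [show {g | ENNReal.ofReal (Real.exp (-t₃ * n)) ≤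
      convPow ρ n (mball g (Real.exp (-t₂ * n)))} =
      {g | ENNReal.ofReal (Real.exp (-t₃ * n)) ≤ μ (mball g r)} from rfl, hGood]
  have h1 : (1:ℝ≥0∞) ≤ μ Badᶜ + μ Bad := by
    calc (1:ℝ≥0∞) = μ Set.univ := (measure_univ).symm
      _ = μ (Badᶜ ∪ Bad) := by rw [Set.compl_union_self]
      _ ≤ μ Badᶜ + μ Bad := measure_union_le _ _
  have h2 : ENNReal.ofReal (1 - Real.exp (-t₁ * n)) =
      1 - ENNReal.ofReal (Real.exp (-t₁ * n)) := by
    rw [ENNReal.ofReal_sub _ (Real.exp_pos _).le, ENNReal.ofReal_one]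
  rw [h2]
  rw [tsub_le_iff_right]
  calc (1:ℝ≥0∞) ≤ μ Badᶜ + μ Bad := h1
    _ ≤ μ Badᶜ + ENNReal.ofReal (Real.exp (-t₁ * n)) := add_le_add le_rfl hμBad
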